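/- Let V be a complex Hilbert space, a bounded coercive, b a bounded sesquilinear form. Let (λ,u) with a(u,v) = λb(u,v) for all v ∈ V, and (λ̄,u*) with a(v,u*) = λb(v,u*) for all v ∈ V. Suppose w, w* ∈ V satisfy ‖w − u‖ ≤ ε, ‖w* − u*‖ ≤ ε*, |b(w,w*)| ≥ β > 0. Then |a(w,w*)/b(w,w*) − λ| ≤ β⁻¹(M₁ + |λ|M₂)·ε·ε*, where M₁, M₂ are the continuity constants of a and b. -/

import Mathlib

/-- Quantitative eigenvalue error bound from the Rayleigh quotient identity:
if `‖w − u‖ ≤ ε`, `‖w⋆ − u⋆‖ ≤ ε⋆` and `|b(w, w⋆)| ≥ β > 0`, then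
`|a(w,w⋆)/b(w,w⋆) − λ| ≤ β⁻¹ (M₁ + |λ| M₂) ε ε⋆`. -/
theorem rayleigh_quotient_error_bound
    {V : Type*} [NormedAddCommGroup V] [InnerProductSpace ℂ V] [CompleteSpace V]
    (a b : V → V → ℂ) (α M₁ M₂ : ℝ) (hα : 0 < α) (hM₁ : 0 < M₁) (hM₂ : 0 < M₂)
    (ha_sub_left : ∀ x y z : V, a (x - y) z = a x z - a y z)
    (ha_sub_right : ∀ x y z : V, a x (y - z) = a x y - a x z)
    (hb_sub_left : ∀ x y z : V, b (x - y) z = b x z - b y z)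
    (hb_sub_right : ∀ x y z : V, b x (y - z) = b x y - b x z)
    (hcoer : ∀ u : V, α * ‖u‖ ^ 2 ≤ (a u u).re)
    (ha_bdd : ∀ u v : V, ‖a u v‖ ≤ M₁ * ‖u‖ * ‖v‖)
    (hb_bdd : ∀ u v : V, ‖b u v‖ ≤ M₂ * ‖u‖ * ‖v‖)
    (lam : ℂ) (u ustar : V)
    (hu : ∀ v : V, a u v = lam * b u v)
    (hustar : ∀ v : V, a v ustar = lam * b v ustar)
    (w wstar : V) (ε εstar β : ℝ) (hβ : 0 < β)
    (hw : ‖w - u‖ ≤ ε) (hwstar : ‖wstar - ustar‖ ≤ εstar)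
    (hbw : β ≤ ‖b w wstar‖) :
    ‖a w wstar / b w wstar - lam‖ ≤
      β⁻¹ * (M₁ + ‖lam‖ * M₂) * ε * εstar := by

  have hbne : b w wstar ≠ 0 := by
    intro h
    rw [h] at hbw
    simp at hbw
    linarith
  have key : a w wstar - lam * b w wstar
      = a (w - u) (wstar - ustar) - lam * b (w - u) (wstar - ustar) := by
    rw [ha_sub_left, ha_sub_right, ha_sub_right, hb_sub_left, hb_sub_right, hb_sub_right,
      hu, hu, hustar]
    ring
  have hdiv : a w wstar / b w wstar - lam = (a w wstar - lam * b w wstar) / b w wstar := by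
    field_simp
  rw [hdiv, key, norm_div]
  have hε : (0:ℝ) ≤ ε := le_trans (norm_nonneg _) hw
  have hεs : (0:ℝ) ≤ εstar := le_trans (norm_nonneg _) hwstar
  have hnum : ‖a (w - u) (wstar - ustar) - lam * b (w - u) (wstar - ustar)‖
      ≤ (M₁ + ‖lam‖ * M₂) * ε * εstar := by
    calc ‖a (w - u) (wstar - ustar) - lam * b (w - u) (wstar - ustar)‖
        ≤ ‖a (w - u) (wstar - ustar)‖
          + ‖lam * b (w - u) (wstar - ustar)‖ := by
          exact (norm_sub_le _ _)
      _ ≤ M₁ * ‖w - u‖ * ‖wstar - ustar‖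
          + ‖lam‖ * (M₂ * ‖w - u‖ * ‖wstar - ustar‖) := by
          rw [norm_mul]
          exact add_le_add (ha_bdd _ _)
            (mul_le_mul_of_nonneg_left (hb_bdd _ _) (norm_nonneg _))
      _ = (M₁ + ‖lam‖ * M₂) * ‖w - u‖ * ‖wstar - ustar‖ := by ring
      _ ≤ (M₁ + ‖lam‖ * M₂) * ε * εstar := by
          have hpos : (0:ℝ) ≤ M₁ + ‖lam‖ * M₂ := by positivity
          have h1 : (M₁ + ‖lam‖ * M₂) * ‖w - u‖
              ≤ (M₁ + ‖lam‖ * M₂) * ε := mul_le_mul_of_nonneg_left hw hpos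
          exact mul_le_mul h1 hwstar (norm_nonneg _) (by positivity)
  calc ‖a (w - u) (wstar - ustar) - lam * b (w - u) (wstar - ustar)‖
        / ‖b w wstar‖
      ≤ ((M₁ + ‖lam‖ * M₂) * ε * εstar) / β :=
        div_le_div₀ (by positivity) hnum hβ hbw
    _ = β⁻¹ * (M₁ + ‖lam‖ * M₂) * ε * εstar := by ring
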